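/- For a finite simple graph G on vertex set [n] with m edges, the quantity r(G) = (∑_{i ∈ V(G)} 2^{deg(i)}) − n − m satisfies: if G is connected with m ≥ 1 edges, then r(G) ≥ 2m − 1. -/

import Mathlib

open Finset

lemma two_mul_le_two_pow_aux : ∀ d : ℕ, 1 ≤ d → 2 * d ≤ 2 ^ d := by
  intro d hd
  induction d with
  | zero => omega
  | succ n ih =>
    rcases Nat.eq_or_lt_of_le hd with h | h
    · simp [← h]
    · have hn : 1 ≤ n := by omega
      have := ih hn
      rw [pow_succ]
      omega

theorem stmt0 {V : Type*} [Fintype V] [DecidableEq V] (G : SimpleGraph V)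
    [DecidableRel G.Adj] (m : ℕ) (hm : G.edgeFinset.card = m)
    (hconn : G.Connected) (hm1 : 1 ≤ m) :
    (2 * m - 1 : ℤ) ≤
      (∑ i : V, (2 : ℤ) ^ G.degree i) - Fintype.card V - m := by
  classical
  -- there is an edge, hence two adjacent vertices
  obtain ⟨e, he⟩ : G.edgeFinset.Nonempty := by
    rw [← Finset.card_pos, hm]; omega
  obtain ⟨a, b, hab⟩ : ∃ a b : V, G.Adj a b := by
    revert he
    refine Sym2.ind (fun a b h => ⟨a, b, ?_⟩) e
    rwa [SimpleGraph.mem_edgeFinset, SimpleGraph.mem_edgeSet] at h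
  -- every vertex has degree at least 1
  have hdeg : ∀ v : V, 1 ≤ G.degree v := by
    intro v
    rw [Nat.one_le_iff_ne_zero, ← Nat.pos_iff_ne_zero,
      SimpleGraph.degree_pos_iff_exists_adj]
    by_cases hv : v = a
    · exact ⟨b, hv ▸ hab⟩
    · obtain ⟨p⟩ := hconn v a
      have hnil : ¬ p.Nil := SimpleGraph.Walk.not_nil_of_ne hv
      exact ⟨p.getVert 1, p.adj_snd hnil⟩
  -- sum of degrees is 2m
  have hsum : ∑ v : V, G.degree v = 2 * m := by
    rw [← hm]; exact SimpleGraph.sum_degrees_eq_twice_card_edges G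
  have h4m : 4 * m ≤ ∑ v : V, 2 ^ G.degree v := by
    calc 4 * m = ∑ v : V, 2 * G.degree v := by
          rw [← Finset.mul_sum, hsum]; ring
      _ ≤ ∑ v : V, 2 ^ G.degree v :=
          Finset.sum_le_sum fun v _ => two_mul_le_two_pow_aux _ (hdeg v)
  -- connectivity: n ≤ m + 1
  have hnb : ∀ w : V, ∃ u, w ≠ a → G.Adj w u ∧ G.dist u a < G.dist w a := by
    intro w
    by_cases hw : w = a
    · exact ⟨a, fun h => absurd hw h⟩
    obtain ⟨p, hp, hlen⟩ := hconn.exists_path_of_dist w a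
    have hnil : ¬ p.Nil := SimpleGraph.Walk.not_nil_of_ne hw
    refine ⟨p.getVert 1, fun _ => ⟨p.adj_snd hnil, ?_⟩⟩
    have h1 : G.dist (p.getVert 1) a ≤ p.tail.length := SimpleGraph.dist_le _
    have h2 : p.tail.length + 1 = p.length := SimpleGraph.Walk.length_tail_add_one hnil
    have h3 : 0 < p.length := by
      rwa [← SimpleGraph.Walk.not_nil_iff_lt_length]
    omega
  choose u hu using hnb
  have hcard : Fintype.card V ≤ m + 1 := by
    have hinj : (({a} : Finset V)ᶜ).card ≤ G.edgeFinset.card := by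
      refine Finset.card_le_card_of_injOn (fun w => s(w, u w)) ?_ ?_
      · intro w hw
        simp only [Finset.mem_coe, Finset.mem_compl, Finset.mem_singleton] at hw ⊢
        rw [SimpleGraph.mem_edgeFinset, SimpleGraph.mem_edgeSet]
        exact (hu w hw).1
      · intro w1 h1 w2 h2 heq
        simp only [Finset.coe_compl, Set.mem_compl_iff, Finset.coe_singleton,
          Set.mem_singleton_iff] at h1 h2
        rw [Sym2.eq_iff] at heq
        rcases heq with ⟨h, _⟩ | ⟨hA, hB⟩
        · exact h
        · exfalso
          have d1 := (hu w1 h1).2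
          have d2 := (hu w2 h2).2
          rw [hB] at d1
          rw [← hA] at d2
          omega
    rw [Finset.card_compl, Finset.card_singleton, hm] at hinj
    have : 1 ≤ Fintype.card V := Fintype.card_pos_iff.mpr ⟨a⟩
    omega
  -- combine
  have h4m' : (4 * m : ℤ) ≤ ∑ i : V, (2 : ℤ) ^ G.degree i := by
    calc (4 * m : ℤ) = ((4 * m : ℕ) : ℤ) := by push_cast; ring
      _ ≤ ((∑ v : V, 2 ^ G.degree v : ℕ) : ℤ) := by exact_mod_cast h4m
      _ = ∑ i : V, (2 : ℤ) ^ G.degree i := by push_cast; rfl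
  have hcard' : (Fintype.card V : ℤ) ≤ m + 1 := by exact_mod_cast hcard
  linarith
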